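/- Let G be a finite simple graph on n vertices and let (B_1,b_1),…,(B_k,b_k) be pairs with B_i ⊆ E(G), b_i ∈ E(G) ∖ B_i, such that every vertex incident to the edge b_i is incident to some edge of B_i, for each i. Then, in the polynomial ring ℝ[x], Σ_{F ⊆ E(G)} (−1)^{|F|} x^{|V(F)|} (1+x)^{n−|V(F)|} = Σ_{F ∈ 2^{E(G)} ∖ 𝔅} (−1)^{|F|} x^{|V(F)|} (1+x)^{n−|V(F)|}, where |V(F)| denotes the number of vertices incident to some edge of F and 𝔅 = 𝔅_1 ∪ ⋯ ∪ 𝔅_k is built from the pairs (B_i, {b_i}). -/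

import Mathlib

open Finset Polynomial

/-- The set of vertices incident to at least one edge of `F`. -/
def edgeVerts {V : Type*} [Fintype V] [DecidableEq V] (F : Finset (Sym2 V)) : Finset V :=
  (Finset.univ : Finset V).filter (fun v => ∃ e ∈ F, v ∈ e)

lemma edgeVerts_insert_of_cov {V : Type*} [Fintype V] [DecidableEq V]
    {F : Finset (Sym2 V)} {e : Sym2 V}
    (h : ∀ v ∈ e, ∃ e' ∈ F, v ∈ e') : edgeVerts (insert e F) = edgeVerts F := by
  unfold edgeVerts
  ext v
  simp only [mem_filter, mem_univ, true_and, Finset.mem_insert]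
  constructor
  · rintro ⟨x, hx | hx, hv⟩
    · exact h v (hx ▸ hv)
    · exact ⟨x, hx, hv⟩
  · rintro ⟨x, hx, hv⟩
    exact ⟨x, Or.inr hx, hv⟩

/-- independence polynomial: broken pairs `(B_i, b_i)` of edges,
where every vertex of `b_i` is covered by `B_i`, allow restricting the
inclusion-exclusion sum for the independence polynomial to `2^{E(G)} \ 𝔅`. -/
theorem stmt_13 {V : Type*} [Fintype V] [DecidableEq V]
    (G : SimpleGraph V) [DecidableRel G.Adj]
    {k : ℕ} (B : Fin k → Finset (Sym2 V)) (b : Fin k → Sym2 V)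
    (hBE : ∀ i, B i ⊆ G.edgeFinset) (hbE : ∀ i, b i ∈ G.edgeFinset)
    (hb : ∀ i, b i ∉ B i)
    (hcov : ∀ i : Fin k, ∀ v : V, v ∈ b i → ∃ e ∈ B i, v ∈ e) :
    ∑ F ∈ G.edgeFinset.powerset,
        (-1 : Polynomial ℝ) ^ F.card * Polynomial.X ^ (edgeVerts F).card *
          (1 + Polynomial.X) ^ (Fintype.card V - (edgeVerts F).card) =
      ∑ F ∈ G.edgeFinset.powerset.filter
          (fun F => ¬ ∃ i : Fin k, B i ⊆ F ∧ ∀ j : Fin k, j < i → ¬ B j \ {b i} ⊆ F),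
        (-1 : Polynomial ℝ) ^ F.card * Polynomial.X ^ (edgeVerts F).card *
          (1 + Polynomial.X) ^ (Fintype.card V - (edgeVerts F).card) := by
  classical
  set f : Finset (Sym2 V) → Polynomial ℝ := fun F =>
    (-1) ^ F.card * Polynomial.X ^ (edgeVerts F).card *
      (1 + Polynomial.X) ^ (Fintype.card V - (edgeVerts F).card) with hf
  set Q : Finset (Sym2 V) → Prop := fun F =>
    ∃ i : Fin k, B i ⊆ F ∧ ∀ j : Fin k, j < i → ¬ B j \ {b i} ⊆ F with hQ
  have hsplit := Finset.sum_filter_add_sum_filter_not G.edgeFinset.powerset Q f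
  -- the set of good indices for F
  set T : Finset (Sym2 V) → Finset (Fin k) := fun F =>
    Finset.univ.filter (fun i => B i ⊆ F ∧ ∀ j : Fin k, j < i → ¬ B j \ {b i} ⊆ F) with hT
  set g : Finset (Sym2 V) → Finset (Sym2 V) := fun F =>
    if h : (T F).Nonempty then
      (if b ((T F).min' h) ∈ F then F.erase (b ((T F).min' h))
        else insert (b ((T F).min' h)) F)
    else F with hg
  have hTQ : ∀ F, Q F → (T F).Nonempty := by
    rintro F ⟨i, hi⟩
    exact ⟨i, mem_filter.2 ⟨mem_univ _, hi⟩⟩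
  -- main facts about g on bad sets
  have main : ∀ F, (hne : (T F).Nonempty) → F ⊆ G.edgeFinset →
      g F ⊆ G.edgeFinset ∧ Q (g F) ∧ g (g F) = F ∧ g F ≠ F ∧ f F + f (g F) = 0 := by
    intro F hne hFE
    set i₀ := (T F).min' hne with hi₀
    set e := b i₀ with he
    have hPF : B i₀ ⊆ F ∧ ∀ j : Fin k, j < i₀ → ¬ B j \ {e} ⊆ F := by
      exact (mem_filter.1 ((T F).min'_mem hne)).2
    set F' := if e ∈ F then F.erase e else insert e F with hF'
    have hgF : g F = F' := by rw [hg]; simp only [dif_pos hne]; rfl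
    -- membership characterization
    have hmem : ∀ x, x ≠ e → (x ∈ F' ↔ x ∈ F) := by
      intro x hx
      simp only [hF']
      split_ifs with h
      · simp [Finset.mem_erase, hx]
      · simp [Finset.mem_insert, hx]
    have hBsub : B i₀ ⊆ F' := by
      intro x hx
      have hxe : x ≠ e := by rintro rfl; exact hb i₀ hx
      exact (hmem x hxe).2 (hPF.1 hx)
    -- P i₀ F'
    have hPF' : B i₀ ⊆ F' ∧ ∀ j : Fin k, j < i₀ → ¬ B j \ {e} ⊆ F' := by
      refine ⟨hBsub, fun j hj hsub => hPF.2 j hj fun x hx => ?_⟩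
      have hxe : x ≠ e := by
        rw [Finset.mem_sdiff] at hx
        simpa using hx.2
      exact (hmem x hxe).1 (hsub hx)
    have hQF' : Q F' := ⟨i₀, hPF'⟩
    have hF'E : F' ⊆ G.edgeFinset := by
      simp only [hF']
      split_ifs with h
      · exact (Finset.erase_subset _ _).trans hFE
      · exact Finset.insert_subset (hbE i₀) hFE
    -- minimality transfers
    have hminF' : ∀ j ∈ T F', i₀ ≤ j := by
      intro j hj
      by_contra hlt
      push_neg at hlt
      replace hj := (mem_filter.1 hj).2
      refine hPF.2 j hlt fun x hx => ?_
      rw [Finset.mem_sdiff] at hx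
      have hxe : x ≠ e := by simpa using hx.2
      exact (hmem x hxe).1 (hj.1 hx.1)
    have hneF' : (T F').Nonempty := hTQ F' hQF'
    have hi₀F' : (T F').min' hneF' = i₀ := by
      refine le_antisymm ((T F').min'_le i₀ ?_) (hminF' _ ((T F').min'_mem hneF'))
      rw [hT, mem_filter]
      exact ⟨mem_univ _, hPF'⟩
    have hgg : g F' = F := by
      rw [hg]
      simp only [dif_pos hneF', hi₀F', ← he]
      simp only [hF']
      split_ifs with h h2 h3
      · exact absurd h2 (Finset.notMem_erase e F)
      · exact Finset.insert_erase h
      · exact Finset.erase_insert h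
      · exact absurd (Finset.mem_insert_self e F) h3
    have hgne : F' ≠ F := by
      simp only [hF']
      split_ifs with h
      · intro hc
        exact (Finset.notMem_erase e F) (hc.symm ▸ h)
      · intro hc
        exact h (hc ▸ Finset.mem_insert_self e F)
    -- edgeVerts equal
    have hcovF : ∀ v ∈ e, ∃ e' ∈ F.erase e, v ∈ e' := by
      intro v hv
      obtain ⟨e', he', hve'⟩ := hcov i₀ v hv
      refine ⟨e', Finset.mem_erase.2 ⟨?_, hPF.1 he'⟩, hve'⟩
      rintro rfl
      exact hb i₀ he'
    have hEV : edgeVerts F' = edgeVerts F := by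
      simp only [hF']
      split_ifs with h
      · conv_rhs => rw [← Finset.insert_erase h]
        rw [edgeVerts_insert_of_cov hcovF]
      · refine edgeVerts_insert_of_cov fun v hv => ?_
        obtain ⟨e', he', hve'⟩ := hcovF v hv
        exact ⟨e', Finset.mem_of_mem_erase he', hve'⟩
    -- cardinality: signs cancel
    have hsign : ((-1 : Polynomial ℝ)) ^ F'.card = -(-1) ^ F.card := by
      simp only [hF']
      split_ifs with h
      · conv_rhs => rw [← Finset.insert_erase h]
        rw [Finset.card_insert_of_notMem (Finset.notMem_erase e F), pow_succ]
        ring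
      · rw [Finset.card_insert_of_notMem h, pow_succ]
        ring
    have hcancel : f F + f F' = 0 := by
      rw [hf]
      simp only [hEV, hsign]
      ring
    rw [hgF]
    exact ⟨hF'E, hQF', hgg, hgne, hcancel⟩
  have hzero : ∑ F ∈ G.edgeFinset.powerset.filter Q, f F = 0 := by
    have hmem : ∀ F ∈ G.edgeFinset.powerset.filter Q,
        F ⊆ G.edgeFinset ∧ (T F).Nonempty := by
      intro F hF
      rw [mem_filter, Finset.mem_powerset] at hF
      exact ⟨hF.1, hTQ F hF.2⟩
    refine Finset.sum_involution (fun F _ => g F) ?_ ?_ ?_ ?_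
    · intro F hF
      obtain ⟨h1, h2⟩ := hmem F hF
      exact (main F h2 h1).2.2.2.2
    · intro F hF _
      obtain ⟨h1, h2⟩ := hmem F hF
      exact (main F h2 h1).2.2.2.1
    · intro F hF
      obtain ⟨h1, h2⟩ := hmem F hF
      obtain ⟨hs, hq, _, _, _⟩ := main F h2 h1
      exact mem_filter.2 ⟨Finset.mem_powerset.2 hs, hq⟩
    · intro F hF
      obtain ⟨h1, h2⟩ := hmem F hF
      exact (main F h2 h1).2.2.1
  rw [← hsplit, hzero, zero_add]
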